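/- With the wave operator A(x₁,x₂) = (ρ⁻¹x₂, div T∇x₁) on X = H̊¹_{Γ₀}(Ω) × L²(Ω) (with the energy-plus-boundary inner product ⟨ρ⁻¹x₂,y₂⟩ + ⟨T∇x₁,∇y₁⟩ + ⟨k₁γ₀x₁,γ₀y₁⟩) and the boundary operators B₁x = k₁γ₀x₁ + γ_ν T∇x₁ and B₂x = γ₀(ρ⁻¹x₂), the Green identity ⟨Ax,y⟩_X + ⟨x,Ay⟩_X = ⟨B₁x,B₂y⟩ + ⟨B₂x,B₁y⟩ holds for all x,y ∈ dom A, where the boundary pairings are the H^{-1/2}–H̊^{1/2} dual pairings on Γ̃. -/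
import Mathlib


open scoped ComplexConjugate

local notation "⟪" x ", " y "⟫" => @inner ℂ _ _ x y

/-- Green identity for the Lagrange wave operator `A(x₁,x₂) = (ρ⁻¹x₂, div T∇x₁)` on
`X = H̊¹_{Γ₀}(Ω) × L²(Ω)` with the energy-plus-boundary inner product
`⟨x,y⟩_X = ⟨ρ⁻¹x₂,y₂⟩ + ⟨T∇x₁,∇y₁⟩ + ⟨k₁γ₀x₁,γ₀y₁⟩` and the boundary operators
`B₁x = k₁γ₀x₁ + γ_ν T∇x₁`, `B₂x = γ₀(ρ⁻¹x₂)`: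
`⟨Ax,y⟩_X + ⟨x,Ay⟩_X = ⟨B₁x,B₂y⟩ + ⟨B₂x,B₁y⟩` for all `x,y ∈ dom A`.
Here `u, v ∈ H̊¹_{Γ₀}(Ω)` represent `ρ⁻¹x₂`, `ρ⁻¹y₂`. -/
theorem stmt12
    {H1 L2 L2d B0 Bp Bm : Type*}
    [NormedAddCommGroup H1] [InnerProductSpace ℂ H1] [CompleteSpace H1]
    [NormedAddCommGroup L2] [InnerProductSpace ℂ L2] [CompleteSpace L2]
    [NormedAddCommGroup L2d] [InnerProductSpace ℂ L2d] [CompleteSpace L2d]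
    [NormedAddCommGroup B0] [InnerProductSpace ℂ B0] [CompleteSpace B0]
    [NormedAddCommGroup Bp] [InnerProductSpace ℂ Bp] [CompleteSpace Bp]
    [NormedAddCommGroup Bm] [InnerProductSpace ℂ Bm] [CompleteSpace Bm]
    (ι : H1 →L[ℂ] L2) (grad : H1 →L[ℂ] L2d) (γ : H1 →L[ℂ] Bp)
    (jp : Bp →L[ℂ] B0) (jm : B0 →L[ℂ] Bm)
    (pair : Bm → Bp → ℂ)
    (hpair : ∀ (h : B0) (u : Bp), pair (jm h) u = ⟪h, jp u⟫)
    (hpair_add : ∀ f g : Bm, ∀ u : Bp, pair (f + g) u = pair f u + pair g u)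
    (Ddiv : Submodule ℂ L2d) (dvg : Ddiv →ₗ[ℂ] L2) (γν : Ddiv →ₗ[ℂ] Bm)
    (hIbP : ∀ (F : Ddiv) (g : H1),
        ⟪dvg F, ι g⟫ = -⟪(F : L2d), grad g⟫ + pair (γν F) (γ g))
    (T : L2d →L[ℂ] L2d) (hT : T.IsPositive)
    (ρinv : L2 →L[ℂ] L2) (hρinv : ρinv.IsPositive)
    (k1 : B0 →L[ℂ] B0) (hk1 : k1.IsPositive)
    (x₁ y₁ : H1) (x₂ y₂ : L2) (u v : H1)
    (hu : ι u = ρinv x₂) (hv : ι v = ρinv y₂)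
    (hx : T (grad x₁) ∈ Ddiv) (hy : T (grad y₁) ∈ Ddiv) :
    (⟪ρinv (dvg ⟨T (grad x₁), hx⟩), y₂⟫ + ⟪T (grad u), grad y₁⟫
        + ⟪k1 (jp (γ u)), jp (γ y₁)⟫)
      + (⟪ρinv x₂, dvg ⟨T (grad y₁), hy⟩⟫ + ⟪T (grad x₁), grad v⟫
        + ⟪k1 (jp (γ x₁)), jp (γ v)⟫)
    = pair (γν ⟨T (grad x₁), hx⟩ + jm (k1 (jp (γ x₁)))) (γ v)
      + conj (pair (γν ⟨T (grad y₁), hy⟩ + jm (k1 (jp (γ y₁)))) (γ u)) := by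
  have hTsym := hT.isSelfAdjoint.isSymmetric
  have hρsym := hρinv.isSelfAdjoint.isSymmetric
  have hksym := hk1.isSelfAdjoint.isSymmetric
  set Fx : Ddiv := ⟨T (grad x₁), hx⟩ with hFx
  set Fy : Ddiv := ⟨T (grad y₁), hy⟩ with hFy
  have h1 : ⟪ρinv (dvg Fx), y₂⟫ = -⟪T (grad x₁), grad v⟫ + pair (γν Fx) (γ v) := by
    have : ⟪ρinv (dvg Fx), y₂⟫ = ⟪dvg Fx, ι v⟫ := by rw [hv]; exact hρsym _ _
    rw [this, hIbP Fx v]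
  have h4 : ⟪ρinv x₂, dvg Fy⟫
      = -⟪T (grad u), grad y₁⟫ + conj (pair (γν Fy) (γ u)) := by
    have : ⟪ρinv x₂, dvg Fy⟫ = conj ⟪dvg Fy, ι u⟫ := by
      rw [← hu, inner_conj_symm]
    rw [this, hIbP Fy u, map_add, map_neg, inner_conj_symm]
    congr 1
    rw [hFy]
    simp only [neg_inj]
    exact (hTsym _ _).symm
  have hb : conj ⟪k1 (jp (γ y₁)), jp (γ u)⟫ = ⟪k1 (jp (γ u)), jp (γ y₁)⟫ := by
    rw [inner_conj_symm]; exact (hksym _ _).symm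
  rw [hpair_add, hpair_add, hpair, hpair, map_add, hb, h1, h4]
  ring
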